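/- If a distribution μ over subsets Z of a finite metric space (M,d) satisfies, for all x,y ∈ M with d(x,y) ≥ Δ, μ({Z : y ∈ Z and d(x,Z) ≥ Δ/ζ}) ≥ p, then the map φ : M → L²(μ) given by φ(x)(Z) = d(x,Z) is 1-Lipschitz and satisfies ‖φ(x) - φ(y)‖_{L²(μ)} ≥ Δ√p/ζ whenever d(x,y) ≥ Δ. -/

import Mathlib

open MeasureTheory

/-- Random zero sets give 1-Lipschitz maps into L²(μ) that preserve distances Δ
up to a factor ζ/√p: φ(x) = (Z ↦ d(x,Z)). -/
theorem stmt19 {M : Type*} [MetricSpace M] [Fintype M] [MeasurableSpace (Set M)]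
    (hmeas : ∀ s : Set (Set M), MeasurableSet s)
    (μ : Measure (Set M)) [IsProbabilityMeasure μ]
    (Δ ζ p : ℝ) (hΔ : 0 < Δ) (hζ : 0 < ζ) (hp0 : 0 < p) (hp1 : p < 1)
    (hμ : ∀ x y : M, Δ ≤ dist x y →
      ENNReal.ofReal p ≤ μ {Z : Set M | y ∈ Z ∧ Δ / ζ ≤ Metric.infDist x Z}) :
    (∀ x y : M,
      Real.sqrt (∫ Z, (Metric.infDist x Z - Metric.infDist y Z) ^ 2 ∂μ) ≤
        dist x y) ∧
    (∀ x y : M, Δ ≤ dist x y →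
      Δ * Real.sqrt p / ζ ≤
        Real.sqrt (∫ Z, (Metric.infDist x Z - Metric.infDist y Z) ^ 2 ∂μ)) := by
  have hlip : ∀ (x y : M) (Z : Set M),
      (Metric.infDist x Z - Metric.infDist y Z) ^ 2 ≤ dist x y ^ 2 := by
    intro x y Z
    have h1 := Metric.infDist_le_infDist_add_dist (x := x) (y := y) (s := Z)
    have h2 := Metric.infDist_le_infDist_add_dist (x := y) (y := x) (s := Z)
    rw [dist_comm y x] at h2
    apply sq_le_sq'
    · linarith
    · linarith
  have hmf : ∀ x y : M, Measurable fun Z : Set M =>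
      (Metric.infDist x Z - Metric.infDist y Z) ^ 2 := fun x y s _ => hmeas _
  have hint : ∀ x y : M, Integrable
      (fun Z : Set M => (Metric.infDist x Z - Metric.infDist y Z) ^ 2) μ := by
    intro x y
    refine (integrable_const (dist x y ^ 2)).mono' (hmf x y).aestronglyMeasurable ?_
    filter_upwards with Z
    rw [Real.norm_eq_abs, abs_of_nonneg (sq_nonneg _)]
    exact hlip x y Z
  have hintnn : ∀ (x y : M), 0 ≤ ∫ Z, (Metric.infDist x Z - Metric.infDist y Z) ^ 2 ∂μ :=
    fun x y => integral_nonneg fun Z => sq_nonneg _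
  constructor
  · intro x y
    have : (∫ Z, (Metric.infDist x Z - Metric.infDist y Z) ^ 2 ∂μ) ≤ dist x y ^ 2 := by
      calc (∫ Z, (Metric.infDist x Z - Metric.infDist y Z) ^ 2 ∂μ)
          ≤ ∫ _, dist x y ^ 2 ∂μ :=
            integral_mono (hint x y) (integrable_const _) (hlip x y)
        _ = dist x y ^ 2 := by simp
    calc Real.sqrt (∫ Z, (Metric.infDist x Z - Metric.infDist y Z) ^ 2 ∂μ)
        ≤ Real.sqrt (dist x y ^ 2) := Real.sqrt_le_sqrt this
      _ = dist x y := Real.sqrt_sq dist_nonneg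
  · intro x y hxy
    set s := {Z : Set M | y ∈ Z ∧ Δ / ζ ≤ Metric.infDist x Z} with hs
    have hμs : p ≤ (μ s).toReal := by
      have h := hμ x y hxy
      have hfin : μ s ≠ ⊤ := (measure_lt_top μ s).ne
      have := ENNReal.toReal_mono hfin h
      rwa [ENNReal.toReal_ofReal hp0.le] at this
    have hlb : p * (Δ / ζ) ^ 2 ≤
        ∫ Z, (Metric.infDist x Z - Metric.infDist y Z) ^ 2 ∂μ := by
      have hge : ∀ Z : Set M,
          s.indicator (fun _ => (Δ / ζ) ^ 2) Z ≤
            (Metric.infDist x Z - Metric.infDist y Z) ^ 2 := by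
        intro Z
        by_cases hZ : Z ∈ s
        · rw [Set.indicator_of_mem hZ]
          obtain ⟨hyZ, hdZ⟩ := hZ
          have hy0 : Metric.infDist y Z = 0 := Metric.infDist_zero_of_mem hyZ
          rw [hy0, sub_zero]
          have h0 : (0:ℝ) ≤ Δ / ζ := by positivity
          exact pow_le_pow_left₀ h0 hdZ 2
        · rw [Set.indicator_of_notMem hZ]
          exact sq_nonneg _
      calc p * (Δ / ζ) ^ 2 ≤ (μ s).toReal * (Δ / ζ) ^ 2 := by
            apply mul_le_mul_of_nonneg_right hμs (by positivity)
        _ = ∫ Z, s.indicator (fun _ => (Δ / ζ) ^ 2) Z ∂μ := by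
            rw [integral_indicator_const _ (hmeas s)]
            rw [smul_eq_mul]
            rfl
        _ ≤ ∫ Z, (Metric.infDist x Z - Metric.infDist y Z) ^ 2 ∂μ := by
            apply integral_mono _ (hint x y) hge
            exact (integrable_const _).indicator (hmeas s)
    have := Real.sqrt_le_sqrt hlb
    calc Δ * Real.sqrt p / ζ = Real.sqrt (p * (Δ / ζ) ^ 2) := by
          rw [Real.sqrt_mul hp0.le, Real.sqrt_sq (by positivity)]
          ring
      _ ≤ _ := this
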